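/- Let β and γ be real numbers with β > 1 and 0 ≤ γ ≤ β. Then there is a constant C = C(β,γ) such that for all k₁, k₂ ∈ ℤ one has ∑_{n∈ℤ} ⟨n-k₁⟩^{-β} ⟨n-k₂⟩^{-γ} ≤ C ⟨k₁-k₂⟩^{-γ}. -/
import Mathlib


/-- Japanese bracket `⟨x⟩ = (1+x²)^{1/2}`. -/
noncomputable def jb (x : ℝ) : ℝ := Real.sqrt (1 + x ^ 2)

/-- For `β > 1`, `0 ≤ γ ≤ β`, there is `C = C(β,γ)` such that for all
`k₁ k₂ : ℤ`, `∑_{n∈ℤ} ⟨n-k₁⟩^{-β} ⟨n-k₂⟩^{-γ} ≤ C ⟨k₁-k₂⟩^{-γ}`. -/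

lemma jb_one_le (x : ℝ) : 1 ≤ jb x := by
  have : (1:ℝ) = Real.sqrt 1 := by simp
  rw [this, jb]
  exact Real.sqrt_le_sqrt (by nlinarith [sq_nonneg x])

lemma jb_pos (x : ℝ) : 0 < jb x := lt_of_lt_of_le one_pos (jb_one_le x)

lemma jb_mono {x y : ℝ} (h : |x| ≤ |y|) : jb x ≤ jb y := by
  apply Real.sqrt_le_sqrt
  have : x ^ 2 ≤ y ^ 2 := by
    rw [← sq_abs x, ← sq_abs y]
    exact pow_le_pow_left₀ (abs_nonneg x) h 2
  linarith

lemma jb_le_two_mul {c m : ℝ} (h : |c| ≤ 2 * |m|) : jb c ≤ 2 * jb m := by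
  have h1 : c ^ 2 ≤ 4 * m ^ 2 := by
    have : |c| ^ 2 ≤ (2 * |m|) ^ 2 := pow_le_pow_left₀ (abs_nonneg c) h 2
    rw [sq_abs] at this; rw [mul_pow, sq_abs] at this; linarith
  have : jb c ≤ Real.sqrt (4 * (1 + m ^ 2)) := Real.sqrt_le_sqrt (by nlinarith)
  calc jb c ≤ Real.sqrt (4 * (1 + m ^ 2)) := this
    _ = Real.sqrt 4 * Real.sqrt (1 + m ^ 2) := Real.sqrt_mul (by norm_num) _
    _ = 2 * jb m := by rw [show (4:ℝ) = 2^2 by norm_num, Real.sqrt_sq (by norm_num)]; rfl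

lemma rpow_neg_le {u v γ : ℝ} (hu : 0 < u) (hv : 0 < v) (h : v ≤ 2 * u) (hγ : 0 ≤ γ) :
    u ^ (-γ) ≤ 2 ^ γ * v ^ (-γ) := by
  have h1 : v ^ (-γ) ≥ (2 * u) ^ (-γ) :=
    Real.rpow_le_rpow_of_nonpos hv h (neg_nonpos.mpr hγ)
  have h2 : (2 * u) ^ (-γ) = 2 ^ (-γ) * u ^ (-γ) := Real.mul_rpow (by norm_num) hu.le
  have h3 : (0:ℝ) < 2 ^ γ := Real.rpow_pos_of_pos (by norm_num) γ
  have h4 : (2:ℝ) ^ γ * 2 ^ (-γ) = 1 := by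
    rw [← Real.rpow_add (by norm_num)]; simp
  calc u ^ (-γ) = 2 ^ γ * (2 ^ (-γ) * u ^ (-γ)) := by rw [← mul_assoc, h4, one_mul]
    _ = 2 ^ γ * (2 * u) ^ (-γ) := by rw [h2]
    _ ≤ 2 ^ γ * v ^ (-γ) := by exact mul_le_mul_of_nonneg_left h1 h3.le

lemma ptwise (β γ : ℝ) (hγ0 : 0 ≤ γ) (hγβ : γ ≤ β) (a b : ℝ) :
    jb a ^ (-β) * jb b ^ (-γ) ≤
      2 ^ γ * jb (b - a) ^ (-γ) * (jb a ^ (-β) + jb b ^ (-β)) := by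
  have hpa := jb_pos a
  have hpb := jb_pos b
  have hpc := jb_pos (b - a)
  have h2γ : (0:ℝ) < 2 ^ γ := Real.rpow_pos_of_pos (by norm_num) γ
  have hnna : (0:ℝ) ≤ jb a ^ (-β) := (Real.rpow_pos_of_pos hpa _).le
  have hnnb : (0:ℝ) ≤ jb b ^ (-β) := (Real.rpow_pos_of_pos hpb _).le
  rcases le_total |a| |b| with hab | hab
  · -- b bigger: |b - a| ≤ 2|b|, bound jb b ^ (-γ)
    have hc : |b - a| ≤ 2 * |b| := by
      calc |b - a| ≤ |b| + |a| := abs_sub _ _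
        _ ≤ 2 * |b| := by linarith
    have h1 : jb b ^ (-γ) ≤ 2 ^ γ * jb (b - a) ^ (-γ) :=
      rpow_neg_le hpb hpc (jb_le_two_mul hc) hγ0
    calc jb a ^ (-β) * jb b ^ (-γ) ≤ jb a ^ (-β) * (2 ^ γ * jb (b - a) ^ (-γ)) :=
          mul_le_mul_of_nonneg_left h1 hnna
      _ = 2 ^ γ * jb (b - a) ^ (-γ) * jb a ^ (-β) := by ring
      _ ≤ 2 ^ γ * jb (b - a) ^ (-γ) * (jb a ^ (-β) + jb b ^ (-β)) := by
          apply mul_le_mul_of_nonneg_left (by linarith)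
          exact mul_nonneg h2γ.le (Real.rpow_pos_of_pos hpc _).le
  · -- a bigger
    have hc : |b - a| ≤ 2 * |a| := by
      calc |b - a| ≤ |b| + |a| := abs_sub _ _
        _ ≤ 2 * |a| := by linarith
    have h1 : jb a ^ (-γ) ≤ 2 ^ γ * jb (b - a) ^ (-γ) :=
      rpow_neg_le hpa hpc (jb_le_two_mul hc) hγ0
    have hba : jb b ≤ jb a := jb_mono hab
    have h2 : jb a ^ (γ - β) ≤ jb b ^ (γ - β) :=
      Real.rpow_le_rpow_of_nonpos hpb hba (by linarith)
    have key : jb a ^ (-β) * jb b ^ (-γ) ≤ 2 ^ γ * jb (b - a) ^ (-γ) * jb b ^ (-β) := by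
      have e1 : jb a ^ (-β) = jb a ^ (-γ) * jb a ^ (γ - β) := by
        rw [← Real.rpow_add hpa]; ring_nf
      have e2 : jb b ^ (γ - β) * jb b ^ (-γ) = jb b ^ (-β) := by
        rw [← Real.rpow_add hpb]; ring_nf
      calc jb a ^ (-β) * jb b ^ (-γ) = jb a ^ (-γ) * (jb a ^ (γ - β) * jb b ^ (-γ)) := by
            rw [e1]; ring
        _ ≤ (2 ^ γ * jb (b - a) ^ (-γ)) * (jb b ^ (γ - β) * jb b ^ (-γ)) := by
            apply mul_le_mul h1
            · exact mul_le_mul_of_nonneg_right h2 (Real.rpow_pos_of_pos hpb _).le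
            · exact mul_nonneg (Real.rpow_pos_of_pos hpa _).le (Real.rpow_pos_of_pos hpb _).le
            · exact mul_nonneg h2γ.le (Real.rpow_pos_of_pos hpc _).le
        _ = 2 ^ γ * jb (b - a) ^ (-γ) * jb b ^ (-β) := by rw [e2]
    calc jb a ^ (-β) * jb b ^ (-γ) ≤ 2 ^ γ * jb (b - a) ^ (-γ) * jb b ^ (-β) := key
      _ ≤ 2 ^ γ * jb (b - a) ^ (-γ) * (jb a ^ (-β) + jb b ^ (-β)) := by
          apply mul_le_mul_of_nonneg_left (by linarith)
          exact mul_nonneg h2γ.le (Real.rpow_pos_of_pos hpc _).le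

lemma summable_jb (β : ℝ) (hβ : 1 < β) : Summable (fun m : ℤ => jb (m : ℝ) ^ (-β)) := by
  have hb : Summable (fun m : ℤ => |(m:ℝ)| ^ (-β) + (if m = 0 then (1:ℝ) else 0)) := by
    apply Summable.add (Real.summable_abs_int_rpow hβ)
    apply summable_of_ne_finset_zero (s := {0})
    intro m hm
    simp at hm
    simp [hm]
  apply Summable.of_nonneg_of_le (fun m => (Real.rpow_pos_of_pos (jb_pos _) _).le) _ hb
  intro m
  by_cases hm : m = 0
  · subst hm
    have h1 : jb ((0:ℤ):ℝ) = 1 := by simp [jb]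
    rw [h1, Real.one_rpow]
    have h2 : |((0:ℤ):ℝ)| = 0 := by simp
    rw [h2, Real.zero_rpow (neg_ne_zero.mpr (by linarith))]
    norm_num
  · have hm' : (1:ℝ) ≤ |(m:ℝ)| := by
      rw [← Int.cast_abs]
      exact_mod_cast Int.one_le_abs (by exact_mod_cast hm)
    have : jb (m:ℝ) ^ (-β) ≤ |(m:ℝ)| ^ (-β) := by
      apply Real.rpow_le_rpow_of_nonpos (by linarith) _ (by linarith)
      rw [jb]
      have : |(m:ℝ)| = Real.sqrt ((m:ℝ) ^ 2) := by rw [Real.sqrt_sq_eq_abs]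
      rw [this]
      exact Real.sqrt_le_sqrt (by linarith)
    simp [hm, this]

theorem stmt0 (β γ : ℝ) (hβ : 1 < β) (hγ0 : 0 ≤ γ) (hγβ : γ ≤ β) :
    ∃ C : ℝ, 0 < C ∧ ∀ k₁ k₂ : ℤ,
      (∑' n : ℤ, ENNReal.ofReal
          (jb ((n : ℝ) - (k₁ : ℝ)) ^ (-β) * jb ((n : ℝ) - (k₂ : ℝ)) ^ (-γ)))
        ≤ ENNReal.ofReal (C * jb ((k₁ : ℝ) - (k₂ : ℝ)) ^ (-γ)) := by
  have hsum := summable_jb β hβ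
  set S : ℝ := ∑' m : ℤ, jb (m : ℝ) ^ (-β) with hS
  have hSpos : 0 < S := by
    exact Summable.tsum_pos hsum (fun m => (Real.rpow_pos_of_pos (jb_pos _) _).le) 0
      (Real.rpow_pos_of_pos (jb_pos _) _)
  refine ⟨2 ^ γ * (2 * S), by positivity, fun k₁ k₂ => ?_⟩
  -- shifted sums
  have shift : ∀ k : ℤ, (∑' n : ℤ, ENNReal.ofReal (jb ((n:ℝ) - (k:ℝ)) ^ (-β)))
      = ENNReal.ofReal S := by
    intro k
    have : (∑' n : ℤ, ENNReal.ofReal (jb ((n:ℝ) - (k:ℝ)) ^ (-β)))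
        = ∑' m : ℤ, ENNReal.ofReal (jb ((m:ℝ)) ^ (-β)) := by
      rw [← (Equiv.subRight k).tsum_eq (fun m : ℤ => ENNReal.ofReal (jb (m:ℝ) ^ (-β)))]
      apply tsum_congr; intro n
      simp only [Equiv.subRight_apply]
      congr 2
      push_cast
      ring
    rw [this, ← ENNReal.ofReal_tsum_of_nonneg (fun m => (Real.rpow_pos_of_pos (jb_pos _) _).le) hsum]
  have key : ∀ n : ℤ,
      ENNReal.ofReal (jb ((n:ℝ) - (k₁:ℝ)) ^ (-β) * jb ((n:ℝ) - (k₂:ℝ)) ^ (-γ))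
      ≤ ENNReal.ofReal (2 ^ γ * jb ((k₁:ℝ) - (k₂:ℝ)) ^ (-γ))
        * (ENNReal.ofReal (jb ((n:ℝ) - (k₁:ℝ)) ^ (-β))
          + ENNReal.ofReal (jb ((n:ℝ) - (k₂:ℝ)) ^ (-β))) := by
    intro n
    have hpt := ptwise β γ hγ0 hγβ ((n:ℝ) - (k₁:ℝ)) ((n:ℝ) - (k₂:ℝ))
    have hd : ((n:ℝ) - (k₂:ℝ)) - ((n:ℝ) - (k₁:ℝ)) = (k₁:ℝ) - (k₂:ℝ) := by ring
    rw [hd] at hpt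
    calc ENNReal.ofReal (jb ((n:ℝ) - (k₁:ℝ)) ^ (-β) * jb ((n:ℝ) - (k₂:ℝ)) ^ (-γ))
        ≤ ENNReal.ofReal (2 ^ γ * jb ((k₁:ℝ) - (k₂:ℝ)) ^ (-γ) *
            (jb ((n:ℝ) - (k₁:ℝ)) ^ (-β) + jb ((n:ℝ) - (k₂:ℝ)) ^ (-β))) :=
          ENNReal.ofReal_le_ofReal hpt
      _ = _ := by
          rw [ENNReal.ofReal_mul (mul_nonneg (Real.rpow_nonneg (by norm_num) _)
            (Real.rpow_nonneg (jb_pos _).le _)), ENNReal.ofReal_add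
            (Real.rpow_pos_of_pos (jb_pos _) _).le (Real.rpow_pos_of_pos (jb_pos _) _).le]
  calc (∑' n : ℤ, ENNReal.ofReal
          (jb ((n : ℝ) - (k₁ : ℝ)) ^ (-β) * jb ((n : ℝ) - (k₂ : ℝ)) ^ (-γ)))
      ≤ ∑' n : ℤ, ENNReal.ofReal (2 ^ γ * jb ((k₁:ℝ) - (k₂:ℝ)) ^ (-γ))
        * (ENNReal.ofReal (jb ((n:ℝ) - (k₁:ℝ)) ^ (-β))
          + ENNReal.ofReal (jb ((n:ℝ) - (k₂:ℝ)) ^ (-β))) := ENNReal.tsum_le_tsum key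
    _ = ENNReal.ofReal (2 ^ γ * jb ((k₁:ℝ) - (k₂:ℝ)) ^ (-γ))
        * ((∑' n : ℤ, ENNReal.ofReal (jb ((n:ℝ) - (k₁:ℝ)) ^ (-β)))
          + (∑' n : ℤ, ENNReal.ofReal (jb ((n:ℝ) - (k₂:ℝ)) ^ (-β)))) := by
        rw [ENNReal.tsum_mul_left, ENNReal.tsum_add]
    _ = ENNReal.ofReal (2 ^ γ * jb ((k₁:ℝ) - (k₂:ℝ)) ^ (-γ)) * ENNReal.ofReal (2 * S) := by
        rw [shift k₁, shift k₂, ← ENNReal.ofReal_add hSpos.le hSpos.le]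
        norm_num [two_mul]
    _ = ENNReal.ofReal (2 ^ γ * (2 * S) * jb ((k₁:ℝ) - (k₂:ℝ)) ^ (-γ)) := by
        rw [← ENNReal.ofReal_mul (mul_nonneg (Real.rpow_nonneg (by norm_num) _)
          (Real.rpow_nonneg (jb_pos _).le _))]
        ring_nf
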